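/- Let Γ be a countable group and equip X̃ = ([0,1]×[0,1])^Γ with the product over Γ of two-dimensional Lebesgue measure on the unit square. For t ∈ [0,1] define α_t : X̃ → X̃ coordinatewise by α_t((x_h)_{h∈Γ}) = (α_t⁰(x_h))_{h∈Γ}, where α_t⁰(x,y) = (x,y) if |x−y| ≥ t and (y,x) if |x−y| < t. Then: (i) each α_t preserves the product measure on X̃; (ii) each α_t commutes with the Bernoulli shift action of Γ on X̃ given by (g·x)_h = x_{g⁻¹h}, i.e. α_t(g·x) = g·α_t(x) for all g ∈ Γ and all x; (iii) α_0 = id; and (iv) α_1 agrees almost everywhere with the coordinatewise flip (x_h, y_h)_{h∈Γ} ↦ (y_h, x_h)_{h∈Γ}, i.e. under the canonical identification X̃ = X × X with X = [0,1]^Γ, α_1 is a.e. equal to the flip (x,y) ↦ (y,x). (This is Popa's malleability of Bernoulli actions.) -/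

import Mathlib

open MeasureTheory

/-- The flip map `α_t⁰` on the square: identity where `|x - y| ≥ t`, coordinate swap
where `|x - y| < t`. -/
noncomputable def flipMap (t : ℝ) (p : ℝ × ℝ) : ℝ × ℝ :=
  if t ≤ |p.1 - p.2| then p else (p.2, p.1)

/-- Two-dimensional Lebesgue measure restricted to the unit square `[0,1] × [0,1]`. -/
noncomputable def squareMeasure : Measure (ℝ × ℝ) :=
  (volume : Measure (ℝ × ℝ)).restrict (Set.Icc 0 1 ×ˢ Set.Icc 0 1)

/-- `μ` is the product over `ι` of copies of `μ₀`: every finite-dimensional cylinder has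
measure equal to the corresponding finite product. -/
def IsProductMeasure {ι X₀ : Type*} [MeasurableSpace X₀] (μ₀ : Measure X₀)
    (μ : Measure (ι → X₀)) : Prop :=
  ∀ (s : Finset ι) (A : ι → Set X₀), (∀ i ∈ s, MeasurableSet (A i)) →
    μ {x | ∀ i ∈ s, x i ∈ A i} = ∏ i ∈ s, μ₀ (A i)

/-- The coordinatewise flip `α_t` on `([0,1]²)^Γ`. -/
noncomputable def bigFlip (Γ : Type*) (t : ℝ) (x : Γ → ℝ × ℝ) : Γ → ℝ × ℝ :=
  fun h => flipMap t (x h)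

/-- The Bernoulli shift action `(g · x)_h = x_{g⁻¹ h}`. -/
def bernoulliShift (Γ : Type*) [Group Γ] (g : Γ) (x : Γ → ℝ × ℝ) : Γ → ℝ × ℝ :=
  fun h => x (g⁻¹ * h)

open Set

lemma measurableSet_S (t : ℝ) : MeasurableSet {p : ℝ × ℝ | t ≤ |p.1 - p.2|} :=
  measurableSet_le measurable_const (measurable_fst.sub measurable_snd).abs

lemma measurable_flipMap (t : ℝ) : Measurable (flipMap t) := by
  unfold flipMap
  exact Measurable.ite (measurableSet_S t) measurable_id
    (measurable_snd.prodMk measurable_fst)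

lemma map_swap_squareMeasure :
    Measure.map Prod.swap squareMeasure = squareMeasure := by
  have hQ : MeasurableSet (Icc (0:ℝ) 1 ×ˢ Icc (0:ℝ) 1) :=
    measurableSet_Icc.prod measurableSet_Icc
  have hswap : Measure.map Prod.swap (volume : Measure (ℝ × ℝ)) = volume := by
    rw [Measure.volume_eq_prod, (Measure.measurePreserving_swap).map_eq, ← Measure.volume_eq_prod]
  have hpre : Prod.swap ⁻¹' (Icc (0:ℝ) 1 ×ˢ Icc (0:ℝ) 1) = Icc (0:ℝ) 1 ×ˢ Icc (0:ℝ) 1 := by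
    ext ⟨a, b⟩
    simp only [Set.mem_preimage, Set.mem_prod, Prod.swap_prod_mk, Set.mem_Icc]
    tauto
  calc Measure.map Prod.swap squareMeasure
      = Measure.map Prod.swap (volume.restrict (Prod.swap ⁻¹' (Icc (0:ℝ) 1 ×ˢ Icc (0:ℝ) 1))) := by
        rw [hpre, squareMeasure]
    _ = (Measure.map Prod.swap volume).restrict (Icc (0:ℝ) 1 ×ˢ Icc (0:ℝ) 1) :=
        (Measure.restrict_map measurable_swap hQ).symm
    _ = squareMeasure := by rw [hswap, squareMeasure]

lemma squareMeasure_preimage_swap {A : Set (ℝ × ℝ)} (hA : MeasurableSet A) :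
    squareMeasure (Prod.swap ⁻¹' A) = squareMeasure A := by
  conv_rhs => rw [← map_swap_squareMeasure]
  rw [Measure.map_apply measurable_swap hA]

lemma squareMeasure_flipMap_preimage (t : ℝ) {A : Set (ℝ × ℝ)} (hA : MeasurableSet A) :
    squareMeasure (flipMap t ⁻¹' A) = squareMeasure A := by
  set S := {p : ℝ × ℝ | t ≤ |p.1 - p.2|} with hSdef
  have hS : MeasurableSet S := measurableSet_S t
  have hpre : flipMap t ⁻¹' A = (A ∩ S) ∪ (Prod.swap ⁻¹' A ∩ Sᶜ) := by
    ext p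
    by_cases h : t ≤ |p.1 - p.2| <;>
      simp [flipMap, hSdef, h, Prod.swap]
  have hScompl : Prod.swap ⁻¹' Sᶜ = Sᶜ := by
    ext p; simp [hSdef, abs_sub_comm]
  have hdisj : Disjoint (A ∩ S) (Prod.swap ⁻¹' A ∩ Sᶜ) :=
    Disjoint.mono inter_subset_right inter_subset_right disjoint_compl_right
  have h2 : Prod.swap ⁻¹' A ∩ Sᶜ = Prod.swap ⁻¹' (A ∩ Sᶜ) := by
    rw [Set.preimage_inter, hScompl]
  rw [hpre, measure_union hdisj ((measurable_swap hA).inter hS.compl), h2,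
    squareMeasure_preimage_swap (hA.inter hS.compl), ← Set.diff_eq,
    measure_inter_add_diff A hS]

/-- Popa's malleability of Bernoulli actions: each `α_t` preserves the
product measure, commutes with the Bernoulli shift, `α_0 = id`, and `α_1` agrees
almost everywhere with the coordinatewise flip. -/
theorem stmt2 (Γ : Type*) [Group Γ] [Countable Γ]
    (μ : Measure (Γ → ℝ × ℝ)) (hμ : IsProductMeasure squareMeasure μ)
    (t : ℝ) (ht : t ∈ Set.Icc (0 : ℝ) 1) :
    MeasurePreserving (bigFlip Γ t) μ μ ∧
    (∀ (g : Γ) (x : Γ → ℝ × ℝ),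
      bigFlip Γ t (bernoulliShift Γ g x) = bernoulliShift Γ g (bigFlip Γ t x)) ∧
    bigFlip Γ 0 = id ∧
    bigFlip Γ 1 =ᵐ[μ] (fun x h => ((x h).2, (x h).1)) := by
  classical
  have hmeas_big : ∀ u : ℝ, Measurable (bigFlip Γ u) := fun u => by
    rw [measurable_pi_iff]
    exact fun h => (measurable_flipMap u).comp (measurable_pi_apply h)
  -- μ is a probability measure
  have hprob : IsProbabilityMeasure μ := by
    constructor
    have := hμ ∅ (fun _ => Set.univ) (by simp)
    simpa using this
  -- the π-system of box cylinders
  set C : Set (Set (Γ → ℝ × ℝ)) :=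
    {S | ∃ (s : Finset Γ) (A : Γ → Set (ℝ × ℝ)), (∀ i, MeasurableSet (A i)) ∧
      S = {x | ∀ i ∈ s, x i ∈ A i}} with hCdef
  have hC_meas : ∀ S ∈ C, MeasurableSet S := by
    rintro S ⟨s, A, hA, rfl⟩
    have : {x : Γ → ℝ × ℝ | ∀ i ∈ s, x i ∈ A i} = ⋂ i ∈ s, (fun x => x i) ⁻¹' A i := by
      ext x; simp
    rw [this]
    exact MeasurableSet.biInter s.countable_toSet
      (fun i _ => (measurable_pi_apply i) (hA i))
  have hC_pi : IsPiSystem C := by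
    rintro S ⟨s, A, hA, rfl⟩ T ⟨u, B, hB, rfl⟩ -
    refine ⟨s ∪ u,
      fun i => (if i ∈ s then A i else Set.univ) ∩ (if i ∈ u then B i else Set.univ),
      fun i => MeasurableSet.inter (by split_ifs; exacts [hA i, MeasurableSet.univ])
        (by split_ifs; exacts [hB i, MeasurableSet.univ]), ?_⟩
    ext x
    simp only [Set.mem_inter_iff, Set.mem_setOf_eq, Finset.mem_union]
    constructor
    · rintro ⟨h1, h2⟩ i hi
      constructor <;> split_ifs with h <;> simp_all
    · intro h
      constructor <;> intro i hi
      · have := (h i (Or.inl hi)).1; simpa [hi] using this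
      · have := (h i (Or.inr hi)).2; simpa [hi] using this
  have hgen : (inferInstance : MeasurableSpace (Γ → ℝ × ℝ)) =
      MeasurableSpace.generateFrom C := by
    refine le_antisymm ?_ (MeasurableSpace.generateFrom_le hC_meas)
    refine iSup_le fun i => ?_
    rw [← measurable_iff_comap_le]
    intro A hA
    have : (fun x : Γ → ℝ × ℝ => x i) ⁻¹' A = {x | ∀ j ∈ ({i} : Finset Γ), x j ∈ A} := by
      ext x; simp
    rw [this]
    exact MeasurableSpace.measurableSet_generateFrom ⟨{i}, fun _ => A, fun _ => hA, rfl⟩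
  -- measure preservation
  have hmap : Measure.map (bigFlip Γ t) μ = μ := by
    have : IsProbabilityMeasure (Measure.map (bigFlip Γ t) μ) :=
      Measure.isProbabilityMeasure_map (hmeas_big t).aemeasurable
    refine MeasureTheory.ext_of_generate_finite C hgen hC_pi ?_ (by simp)
    rintro S hS
    obtain ⟨s, A, hA, rfl⟩ := hS
    rw [Measure.map_apply (hmeas_big t) (hC_meas _ ⟨s, A, hA, rfl⟩)]
    have hpre : bigFlip Γ t ⁻¹' {x | ∀ i ∈ s, x i ∈ A i}
        = {x | ∀ i ∈ s, x i ∈ flipMap t ⁻¹' A i} := by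
      ext x; simp [bigFlip]
    rw [hpre, hμ s _ (fun i _ => (measurable_flipMap t) (hA i)),
      hμ s A (fun i _ => hA i)]
    exact Finset.prod_congr rfl fun i _ => squareMeasure_flipMap_preimage t (hA i)
  refine ⟨⟨hmeas_big t, hmap⟩, fun g x => rfl, ?_, ?_⟩
  · funext x h
    simp [bigFlip, flipMap, abs_nonneg]
  · -- a.e. equality at t = 1
    set D : Set (ℝ × ℝ) := {p | 1 ≤ |p.1 - p.2|} with hDdef
    have hD : MeasurableSet D := measurableSet_S 1
    have hDzero : squareMeasure D = 0 := by
      rw [squareMeasure, Measure.restrict_apply hD]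
      have hsub : D ∩ Set.Icc 0 1 ×ˢ Set.Icc 0 1 ⊆
          ({(0 : ℝ)} ×ˢ (Set.univ : Set ℝ)) ∪ ({(1 : ℝ)} ×ˢ (Set.univ : Set ℝ)) := by
        rintro ⟨a, b⟩ ⟨h1, ⟨ha0, ha1⟩, hb0, hb1⟩
        replace h1 : (1:ℝ) ≤ |a - b| := h1
        rcases le_or_gt 0 (a - b) with h | h
        · right
          have : a - b = 1 := le_antisymm (by linarith) (by rwa [abs_of_nonneg h] at h1)
          simp [show a = 1 by linarith]
        · left
          have : b - a = 1 := le_antisymm (by linarith) (by rw [abs_of_neg (by linarith)] at h1; linarith)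
          simp [show a = 0 by linarith]
      refine measure_mono_null hsub (le_antisymm ?_ zero_le)
      refine le_trans (measure_union_le _ _) ?_
      have h0 : (volume : Measure (ℝ × ℝ)) ({(0:ℝ)} ×ˢ (Set.univ : Set ℝ)) = 0 := by
        rw [Measure.volume_eq_prod, Measure.prod_prod]; simp
      have h1 : (volume : Measure (ℝ × ℝ)) ({(1:ℝ)} ×ˢ (Set.univ : Set ℝ)) = 0 := by
        rw [Measure.volume_eq_prod, Measure.prod_prod]; simp
      rw [h0, h1]
      simp
    have hbad : μ (⋃ h : Γ, {x : Γ → ℝ × ℝ | x h ∈ D}) = 0 := by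
      refine measure_iUnion_null fun h => ?_
      have : {x : Γ → ℝ × ℝ | x h ∈ D} = {x | ∀ i ∈ ({h} : Finset Γ), x i ∈ D} := by
        ext x; simp
      rw [this, hμ {h} (fun _ => D) (fun _ _ => hD)]
      simp [hDzero]
    rw [Filter.eventuallyEq_iff_exists_mem]
    refine ⟨(⋃ h : Γ, {x : Γ → ℝ × ℝ | x h ∈ D})ᶜ, ?_, ?_⟩
    · rw [mem_ae_iff, compl_compl]; exact hbad
    · intro x hx
      simp only [Set.mem_compl_iff, Set.mem_iUnion, not_exists, Set.mem_setOf_eq] at hx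
      funext h
      have := hx h
      simp only [hDdef, Set.mem_setOf_eq, not_le] at this
      simp [bigFlip, flipMap, not_le.mpr this]
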